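/- Let (X,‖·‖) be a Banach space, f ∈ C([a,b],X), m ∈ ℕ (m ≥ 1), 0 < α < 1, and n ∈ ℕ with n^{1−α} > 2 and ⌈na⌉ ≤ ⌊nb⌋. Then for every x ∈ [a,b], ‖A_n(f,x) − f(x)‖ ≤ (1 + 4^m)^{1/(2m)} [ 2ω₁(f, 1/n^α) + ‖f‖_∞/(m(n^{1−α} − 2)^{2m}) ]. -/

import Mathlib

open scoped BigOperators
open Real Filter

/-- The algebraic sigmoid function `φ(x) = x / (1 + x^(2m))^(1/(2m))`. -/
noncomputable def phi (m : ℕ) (x : ℝ) : ℝ :=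
  x / (1 + x ^ (2 * m)) ^ ((1 : ℝ) / (2 * m))

/-- The activation function `Φ(x) = (φ(x+1) - φ(x-1))/4`. -/
noncomputable def Phi (m : ℕ) (x : ℝ) : ℝ :=
  (phi m (x + 1) - phi m (x - 1)) / 4

/-- First modulus of continuity of `f` on the set `s`, with step `δ`. -/
noncomputable def omega1 {X : Type*} [NormedAddCommGroup X] (f : ℝ → X) (s : Set ℝ)
    (δ : ℝ) : ℝ :=
  sSup {r : ℝ | ∃ x ∈ s, ∃ y ∈ s, |x - y| ≤ δ ∧ r = ‖f x - f y‖}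

/-- Sup norm of `f` over a set `s`. -/
noncomputable def supNorm {X : Type*} [NormedAddCommGroup X] (f : ℝ → X) (s : Set ℝ) : ℝ :=
  ⨆ t : s, ‖f t‖

/-- The neural network operator `A_n` induced by the density `Φ`. -/
noncomputable def An {X : Type*} [NormedAddCommGroup X] [Module ℝ X]
    (m : ℕ) (a b : ℝ) (n : ℕ) (f : ℝ → X) (x : ℝ) : X :=
  (∑ k ∈ Finset.Icc ⌈(n : ℝ) * a⌉ ⌊(n : ℝ) * b⌋, Phi m ((n : ℝ) * x - (k : ℝ)))⁻¹ •
    ∑ k ∈ Finset.Icc ⌈(n : ℝ) * a⌉ ⌊(n : ℝ) * b⌋,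
      Phi m ((n : ℝ) * x - (k : ℝ)) • f ((k : ℝ) / n)

namespace NNAux

lemma pow2m_nonneg (m : ℕ) (x : ℝ) : 0 ≤ x ^ (2*m) := by rw [pow_mul]; positivity

lemma base_pos (m : ℕ) (x : ℝ) : (0:ℝ) < 1 + x ^ (2*m) := by
  have := pow2m_nonneg m x; linarith

lemma hm2 {m : ℕ} (hm : 1 ≤ m) : (0:ℝ) < 2 * m := by
  have : (1:ℝ) ≤ m := by exact_mod_cast hm
  linarith

lemma denom_pos (m : ℕ) (x : ℝ) : (0:ℝ) < (1 + x ^ (2*m)) ^ ((1:ℝ)/(2*m)) :=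
  Real.rpow_pos_of_pos (base_pos m x) _

lemma pow_rpow_inv {m : ℕ} (hm : 1 ≤ m) {x : ℝ} (hx : 0 ≤ x) :
    (x ^ (2*m)) ^ ((1:ℝ)/(2*m)) = x := by
  rw [← Real.rpow_natCast x (2*m), ← Real.rpow_mul hx]
  push_cast
  rw [mul_one_div_cancel (ne_of_gt (hm2 hm)), Real.rpow_one]

lemma rpow_inv_pow {m : ℕ} (hm : 1 ≤ m) {x : ℝ} (hx : 0 ≤ x) :
    (x ^ ((1:ℝ)/(2*m))) ^ (2*m) = x := by
  rw [← Real.rpow_natCast (x ^ ((1:ℝ)/(2*m))) (2*m), ← Real.rpow_mul hx]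
  push_cast
  rw [one_div_mul_cancel (ne_of_gt (hm2 hm)), Real.rpow_one]

lemma phi_odd (m : ℕ) (x : ℝ) : phi m (-x) = - phi m x := by
  unfold phi
  rw [Even.neg_pow (even_two_mul m), neg_div]

lemma phi_nonneg (m : ℕ) {x : ℝ} (hx : 0 ≤ x) : 0 ≤ phi m x :=
  div_nonneg hx (denom_pos m x).le

lemma phi_nonpos (m : ℕ) {x : ℝ} (hx : x ≤ 0) : phi m x ≤ 0 :=
  div_nonpos_of_nonpos_of_nonneg hx (denom_pos m x).le

lemma phi_le_one {m : ℕ} (hm : 1 ≤ m) (x : ℝ) : phi m x ≤ 1 := by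
  rcases le_or_gt x 0 with hx | hx
  · exact (phi_nonpos m hx).trans zero_le_one
  · rw [phi, div_le_one (denom_pos m x)]
    calc x = (x ^ (2*m)) ^ ((1:ℝ)/(2*m)) := (pow_rpow_inv hm hx.le).symm
      _ ≤ (1 + x ^ (2*m)) ^ ((1:ℝ)/(2*m)) :=
        Real.rpow_le_rpow (pow2m_nonneg m x) (by linarith) (by positivity)

lemma phi_mono_nonneg {m : ℕ} (hm : 1 ≤ m) {u v : ℝ} (hu : 0 ≤ u) (huv : u ≤ v) :
    phi m u ≤ phi m v := by
  have hv : 0 ≤ v := hu.trans huv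
  rw [phi, phi, div_le_div_iff₀ (denom_pos m u) (denom_pos m v)]
  have h2m : 2*m ≠ 0 := by omega
  apply (pow_le_pow_iff_left₀ (by positivity) (by positivity) h2m).mp
  rw [mul_pow, mul_pow, rpow_inv_pow hm (base_pos m u).le, rpow_inv_pow hm (base_pos m v).le]
  have hp : u ^ (2*m) ≤ v ^ (2*m) := pow_le_pow_left₀ hu huv _
  nlinarith [pow2m_nonneg m u, pow2m_nonneg m v]

lemma phi_mono {m : ℕ} (hm : 1 ≤ m) : Monotone (phi m) := by
  intro u v huv
  rcases le_total 0 u with hu | hu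
  · exact phi_mono_nonneg hm hu huv
  · rcases le_total 0 v with hv | hv
    · exact (phi_nonpos m hu).trans (phi_nonneg m hv)
    · have h := phi_mono_nonneg hm (show (0:ℝ) ≤ -v by linarith) (show -v ≤ -u by linarith)
      rw [phi_odd, phi_odd] at h
      linarith

lemma Phi_nonneg {m : ℕ} (hm : 1 ≤ m) (t : ℝ) : 0 ≤ Phi m t := by
  have := phi_mono hm (show t - 1 ≤ t + 1 by linarith)
  unfold Phi; linarith

lemma Phi_even (m : ℕ) (t : ℝ) : Phi m (-t) = Phi m t := by
  unfold Phi
  rw [show -t + 1 = -(t-1) by ring, show -t - 1 = -(t+1) by ring, phi_odd, phi_odd]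
  ring

lemma phi_ge_lin {m : ℕ} (hm : 1 ≤ m) {u : ℝ} (h0 : 0 ≤ u) (h2 : u ≤ 2) :
    u / (((1:ℝ) + 4^m) ^ ((1:ℝ)/(2*m))) ≤ phi m u := by
  have h4 : (2:ℝ)^(2*m) = 4^m := by rw [pow_mul]; norm_num
  have hD : (1 + u ^ (2*m)) ^ ((1:ℝ)/(2*m)) ≤ ((1:ℝ) + 4^m) ^ ((1:ℝ)/(2*m)) := by
    apply Real.rpow_le_rpow (base_pos m u).le _ (by positivity)
    have := pow_le_pow_left₀ h0 h2 (2*m)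
    rw [h4] at this
    linarith
  exact div_le_div_of_nonneg_left h0 (denom_pos m u) hD

lemma Phi_ge {m : ℕ} (hm : 1 ≤ m) {t : ℝ} (ht : |t| ≤ 1) :
    1 / (2 * (((1:ℝ) + 4^m) ^ ((1:ℝ)/(2*m)))) ≤ Phi m t := by
  rw [abs_le] at ht
  set C := ((1:ℝ) + 4^m) ^ ((1:ℝ)/(2*m)) with hC
  have hCpos : 0 < C := Real.rpow_pos_of_pos (by positivity) _
  have h1 : phi m (t - 1) = - phi m (1 - t) := by
    rw [show t - 1 = -(1-t) by ring, phi_odd]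
  have h2 : (t+1) / C ≤ phi m (t+1) := phi_ge_lin hm (by linarith [ht.1]) (by linarith [ht.2])
  have h3 : (1-t) / C ≤ phi m (1-t) := phi_ge_lin hm (by linarith [ht.2]) (by linarith [ht.1])
  have hsum : 2/C ≤ phi m (t+1) + phi m (1-t) := by
    have : (t+1)/C + (1-t)/C = 2/C := by field_simp; ring
    linarith
  have heq : 1/(2*C) = (2/C)/4 := by field_simp; ring
  unfold Phi
  rw [h1, heq]
  linarith

lemma bernoulli_rpow {m : ℕ} (hm : 1 ≤ m) {u : ℝ} (hu : 0 ≤ u) :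
    (1+u)^((1:ℝ)/(2*m)) ≤ 1 + u/(2*(m:ℝ)) := by
  have h2m : (0:ℝ) < 2*(m:ℝ) := hm2 hm
  have hd : 0 ≤ u/(2*(m:ℝ)) := by positivity
  have hb : (1:ℝ) + u ≤ (1 + u/(2*(m:ℝ)))^(2*m : ℕ) := by
    have h := one_add_mul_le_pow (a := u/(2*(m:ℝ))) (by linarith) (2*m)
    have he : ((2*m : ℕ):ℝ) * (u/(2*(m:ℝ))) = u := by
      push_cast; field_simp
    rw [he] at h
    exact h
  calc (1+u)^((1:ℝ)/(2*m)) ≤ ((1 + u/(2*(m:ℝ)))^(2*m : ℕ))^((1:ℝ)/(2*m)) :=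
        Real.rpow_le_rpow (by linarith) hb (by positivity)
    _ = 1 + u/(2*(m:ℝ)) := pow_rpow_inv hm (by linarith)

lemma phi_lower {m : ℕ} (hm : 1 ≤ m) {t : ℝ} (ht : 0 < t) :
    1 - 1/(2*(m:ℝ)*t^(2*m)) ≤ phi m t := by
  have h2m : (0:ℝ) < 2*(m:ℝ) := hm2 hm
  have htp : (0:ℝ) < t^(2*m) := by positivity
  set u : ℝ := (t^(2*m))⁻¹ with hu
  have hu0 : 0 ≤ u := by positivity
  have hsplit : (1 + t^(2*m)) ^ ((1:ℝ)/(2*m)) = t * (1+u)^((1:ℝ)/(2*m)) := by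
    have hb : 1 + t^(2*m) = t^(2*m) * (1+u) := by
      rw [hu, mul_add, mul_one, mul_inv_cancel₀ (ne_of_gt htp)]
      ring
    rw [hb, Real.mul_rpow htp.le (by linarith), pow_rpow_inv hm ht.le]
  have hphi : phi m t = ((1+u)^((1:ℝ)/(2*m)))⁻¹ := by
    rw [phi, hsplit, ← div_div, div_self (ne_of_gt ht), one_div]
  have h1 : (1+u)^((1:ℝ)/(2*m)) ≤ 1 + u/(2*(m:ℝ)) := bernoulli_rpow hm hu0
  have hpow_pos : (0:ℝ) < (1+u)^((1:ℝ)/(2*m)) := Real.rpow_pos_of_pos (by linarith) _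
  have h2 : (1 + u/(2*(m:ℝ)))⁻¹ ≤ ((1+u)^((1:ℝ)/(2*m)))⁻¹ :=
    inv_anti₀ hpow_pos h1
  have h3 : 1 - u/(2*(m:ℝ)) ≤ (1 + u/(2*(m:ℝ)))⁻¹ := by
    have hc : 0 < 1 + u/(2*(m:ℝ)) := by positivity
    rw [inv_eq_one_div, le_div_iff₀ hc]
    nlinarith [sq_nonneg (u/(2*(m:ℝ)))]
  have he : u/(2*(m:ℝ)) = 1/(2*(m:ℝ)*t^(2*m)) := by
    rw [hu]; field_simp
  rw [hphi, ← he]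
  linarith

lemma telescope (m : ℕ) (y : ℝ) (p : ℤ) :
    ∀ q : ℤ, p ≤ q → ∑ k ∈ Finset.Icc p q, Phi m (y - k) =
      (phi m (y-p+1) + phi m (y-p) - phi m (y-q) - phi m (y-q-1))/4 := by
  intro q
  refine Int.le_induction
    (motive := fun q _ => ∑ k ∈ Finset.Icc p q, Phi m (y - k) =
      (phi m (y-p+1) + phi m (y-p) - phi m (y-q) - phi m (y-q-1))/4) ?_ ?_ q
  · show ∑ k ∈ Finset.Icc p p, Phi m (y - k) = _
    rw [Finset.Icc_self, Finset.sum_singleton]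
    unfold Phi
    ring
  · intro q hpq ih
    show ∑ k ∈ Finset.Icc p (q+1), Phi m (y - k) = _
    have hins : Finset.Icc p (q+1) = insert (q+1) (Finset.Icc p q) := by
      ext j
      simp only [Finset.mem_Icc, Finset.mem_insert]
      omega
    rw [hins, Finset.sum_insert (by simp [Finset.mem_Icc]), ih]
    push_cast
    rw [show y - ((q:ℝ)+1) = y - q - 1 by ring]
    unfold Phi
    rw [show y - (q:ℝ) - 1 + 1 = y - (q:ℝ) by ring]
    ring

lemma sum_Icc_neg (F : ℤ → ℝ) (p q : ℤ) :
    ∑ k ∈ Finset.Icc p q, F k = ∑ k ∈ Finset.Icc (-q) (-p), F (-k) := by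
  have h : Finset.Icc (-q) (-p) = (Finset.Icc p q).map ⟨Neg.neg, neg_injective⟩ := by
    ext j
    simp only [Finset.mem_Icc, Finset.mem_map, Function.Embedding.coeFn_mk]
    constructor
    · intro hj; exact ⟨-j, by omega, by omega⟩
    · rintro ⟨k, hk, rfl⟩; omega
  rw [h, Finset.sum_map]
  simp

lemma side_bound {m : ℕ} (hm : 1 ≤ m) (y lam : ℝ) (p q : ℤ) (hpq : p ≤ q)
    (hlam : 2 < lam) (hq : lam ≤ y - q) :
    ∑ k ∈ Finset.Icc p q, Phi m (y - k) ≤ 1/(4*(m:ℝ)*(lam - 2)^(2*m)) := by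
  rw [telescope m y p q hpq]
  have hl2 : (0:ℝ) < lam - 2 := by linarith
  have hX : (0:ℝ) < (lam-2)^(2*m) := by positivity
  have hm' : (0:ℝ) < (m:ℝ) := by have := hm2 hm; linarith
  have key : ∀ s : ℝ, lam - 2 ≤ s → 1 - 1/(2*(m:ℝ)*(lam-2)^(2*m)) ≤ phi m s := by
    intro s hs
    have hs0 : 0 < s := by linarith
    have hpow : (lam-2)^(2*m) ≤ s^(2*m) := pow_le_pow_left₀ hl2.le hs _
    have hdiv : 1/(2*(m:ℝ)*s^(2*m)) ≤ 1/(2*(m:ℝ)*(lam-2)^(2*m)) := by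
      apply one_div_le_one_div_of_le (by positivity)
      nlinarith
    linarith [phi_lower hm hs0]
  have h3 := key (y - q) (by linarith)
  have h4 := key (y - q - 1) (by linarith)
  have h1 := phi_le_one hm (y - (p:ℝ) + 1)
  have h2 := phi_le_one hm (y - (p:ℝ))
  have hc : (1/(2*(m:ℝ)*(lam-2)^(2*m)))/2 = 1/(4*(m:ℝ)*(lam-2)^(2*m)) := by
    field_simp
    ring
  linarith

end NNAux

set_option maxHeartbeats 800000 in
open NNAux in
theorem An_approx_continuous {X : Type*} [NormedAddCommGroup X] [NormedSpace ℝ X]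
    [CompleteSpace X] (a b : ℝ) (hab : a ≤ b) (f : ℝ → X)
    (hf : ContinuousOn f (Set.Icc a b)) (m : ℕ) (hm : 1 ≤ m)
    (α : ℝ) (hα0 : 0 < α) (hα1 : α < 1) (n : ℕ) (hn : 2 < (n : ℝ) ^ (1 - α))
    (hnab : ⌈(n : ℝ) * a⌉ ≤ ⌊(n : ℝ) * b⌋) :
    ∀ x ∈ Set.Icc a b,
      ‖An m a b n f x - f x‖ ≤
        ((1 : ℝ) + 4 ^ m) ^ ((1 : ℝ) / (2 * m)) *
          (2 * omega1 f (Set.Icc a b) (1 / (n : ℝ) ^ α) +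
            supNorm f (Set.Icc a b) / (m * ((n : ℝ) ^ (1 - α) - 2) ^ (2 * m))) := by
  intro x hx
  simp only [An]
  have hxmem : x ∈ Set.Icc a b := hx
  obtain ⟨hax, hxb⟩ := hx
  have hm0 : (0:ℝ) < (m:ℝ) := by have := hm2 hm; linarith
  have hn0 : (0:ℝ) < (n:ℝ) := by
    rcases Nat.eq_zero_or_pos n with h | h
    · subst h
      rw [Nat.cast_zero, Real.zero_rpow (by linarith : 1 - α ≠ 0)] at hn
      linarith
    · exact_mod_cast h
  set L : ℤ := ⌈(n : ℝ) * a⌉ with hL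
  set U : ℤ := ⌊(n : ℝ) * b⌋ with hU
  set y : ℝ := (n:ℝ) * x with hy
  set lam : ℝ := (n:ℝ)^(1-α) with hlam
  set C : ℝ := ((1 : ℝ) + 4 ^ m) ^ ((1 : ℝ) / (2 * m)) with hC
  set dl : ℝ := 1 / (n:ℝ)^α with hdl
  set S : ℝ := supNorm f (Set.Icc a b) with hS
  set om : ℝ := omega1 f (Set.Icc a b) dl with hom
  have hCpos : 0 < C := Real.rpow_pos_of_pos (by positivity) _
  have hCne : C ≠ 0 := ne_of_gt hCpos
  have hC1 : 1 ≤ C := by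
    rw [hC]
    calc (1:ℝ) = 1 ^ ((1:ℝ)/(2*m)) := (Real.one_rpow _).symm
      _ ≤ _ := by
        apply Real.rpow_le_rpow zero_le_one _ (by positivity)
        have : (0:ℝ) < 4^m := by positivity
        linarith
  clear_value C
  have hlam2 : 2 < lam := hn
  clear_value lam
  have hlamsub : (0:ℝ) < lam - 2 := by linarith
  have hX : (0:ℝ) < (lam-2)^(2*m) := by positivity
  have hXne : ((lam:ℝ)-2)^(2*m) ≠ 0 := ne_of_gt hX
  have hmne : (m:ℝ) ≠ 0 := ne_of_gt hm0
  have hdl0 : 0 < dl := by rw [hdl]; positivity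
  clear_value dl S om
  -- bounds for f
  obtain ⟨B, hB⟩ := (isCompact_Icc : IsCompact (Set.Icc a b)).exists_bound_of_continuousOn hf
  have habmem : a ∈ Set.Icc a b := ⟨le_refl a, hab⟩
  have hSub : ∀ t ∈ Set.Icc a b, ‖f t‖ ≤ S := by
    intro t ht
    rw [hS, supNorm]
    have hbdd : BddAbove (Set.range fun t : (Set.Icc a b) => ‖f t‖) := by
      refine ⟨B, ?_⟩
      rintro r ⟨⟨t', ht'⟩, rfl⟩
      exact hB t' ht'
    exact le_ciSup hbdd ⟨t, ht⟩
  have hS0 : 0 ≤ S := le_trans (norm_nonneg _) (hSub a habmem)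
  have homub : ∀ u v : ℝ, u ∈ Set.Icc a b → v ∈ Set.Icc a b → |u - v| ≤ dl →
      ‖f u - f v‖ ≤ om := by
    intro u v hu hv huv
    rw [hom, omega1]
    apply le_csSup
    · refine ⟨2*B, ?_⟩
      rintro r ⟨u', hu', v', hv', _, rfl⟩
      calc ‖f u' - f v'‖ ≤ ‖f u'‖ + ‖f v'‖ := norm_sub_le _ _
        _ ≤ 2*B := by linarith [hB u' hu', hB v' hv']
    · exact ⟨u, hu, v, hv, huv, rfl⟩
  have hom0 : 0 ≤ om := by
    have h := homub a a habmem habmem (by simp [hdl0.le])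
    calc (0:ℝ) = ‖f a - f a‖ := by simp
      _ ≤ om := h
  -- the sums
  set K := Finset.Icc L U with hK
  set V : ℝ := ∑ k ∈ K, Phi m (y - (k:ℝ)) with hV
  clear_value V
  -- location of y
  have hyna : (n:ℝ)*a ≤ y := by rw [hy]; exact mul_le_mul_of_nonneg_left hax hn0.le
  have hynb : y ≤ (n:ℝ)*b := by rw [hy]; exact mul_le_mul_of_nonneg_left hxb hn0.le
  have hyL : (L:ℝ) - 1 < y := by
    have := Int.ceil_lt_add_one ((n:ℝ)*a)
    rw [← hL] at this
    linarith
  have hyU : y < (U:ℝ) + 1 := by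
    have := Int.lt_floor_add_one ((n:ℝ)*b)
    rw [← hU] at this
    linarith
  have hfly : ⌊y⌋ ≤ U := by
    have h1 : ⌊y⌋ < U + 1 := by
      rw [Int.floor_lt]
      push_cast
      linarith
    omega
  -- lower bound on V
  set k0 : ℤ := max L ⌊y⌋ with hk0
  clear_value k0
  have hk0K : k0 ∈ K := by
    rw [hK, Finset.mem_Icc]
    rw [hk0]
    exact ⟨le_max_left _ _, max_le hnab hfly⟩
  have hk0near : |y - (k0:ℝ)| ≤ 1 := by
    rcases le_or_gt L ⌊y⌋ with h | h
    · rw [hk0, max_eq_right h, abs_le]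
      constructor
      · linarith [Int.floor_le y]
      · linarith [Int.lt_floor_add_one y]
    · rw [hk0, max_eq_left h.le, abs_le]
      have hcast : ((⌊y⌋:ℝ)) + 1 ≤ (L:ℝ) := by exact_mod_cast h
      have h1 : y < (L:ℝ) := by linarith [Int.lt_floor_add_one y]
      constructor <;> linarith
  have hVge1 : 1/(2*C) ≤ V := by
    have h1 : Phi m (y - (k0:ℝ)) ≤ V := by
      rw [hV]
      exact Finset.single_le_sum (f := fun k : ℤ => Phi m (y - (k:ℝ)))
        (fun k _ => Phi_nonneg hm _) hk0K
    have h2 := Phi_ge hm hk0near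
    rw [← hC] at h2
    linarith
  have hV0 : 0 < V := lt_of_lt_of_le (div_pos one_pos (by linarith)) hVge1
  have hVne : V ≠ 0 := ne_of_gt hV0
  -- difference identity
  have hsum_smul : ∑ k ∈ K, Phi m (y - (k:ℝ)) • (f ((k:ℝ)/n) - f x)
      = (∑ k ∈ K, Phi m (y - (k:ℝ)) • f ((k:ℝ)/n)) - V • f x := by
    rw [hV]
    simp only [smul_sub]
    rw [Finset.sum_sub_distrib, ← Finset.sum_smul]
  have hdiff : (V⁻¹ • ∑ k ∈ K, Phi m (y - (k:ℝ)) • f ((k:ℝ)/n)) - f x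
      = V⁻¹ • ∑ k ∈ K, Phi m (y - (k:ℝ)) • (f ((k:ℝ)/n) - f x) := by
    rw [hsum_smul, smul_sub, inv_smul_smul₀ (ne_of_gt hV0)]
  -- norm estimate
  have hnorm : ‖(V⁻¹ • ∑ k ∈ K, Phi m (y - (k:ℝ)) • f ((k:ℝ)/n)) - f x‖
      ≤ V⁻¹ * ∑ k ∈ K, Phi m (y - (k:ℝ)) * ‖f ((k:ℝ)/n) - f x‖ := by
    rw [hdiff, norm_smul, Real.norm_eq_abs, abs_of_pos (inv_pos.mpr hV0)]
    apply mul_le_mul_of_nonneg_left _ (inv_pos.mpr hV0).le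
    calc ‖∑ k ∈ K, Phi m (y - (k:ℝ)) • (f ((k:ℝ)/n) - f x)‖
        ≤ ∑ k ∈ K, ‖Phi m (y - (k:ℝ)) • (f ((k:ℝ)/n) - f x)‖ := norm_sum_le _ _
      _ = ∑ k ∈ K, Phi m (y - (k:ℝ)) * ‖f ((k:ℝ)/n) - f x‖ := by
          apply Finset.sum_congr rfl
          intro k _
          rw [norm_smul, Real.norm_eq_abs, abs_of_nonneg (Phi_nonneg hm _)]
  -- membership of sample points
  have hknab : ∀ k ∈ K, ((k:ℝ)/n) ∈ Set.Icc a b := by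
    intro k hk
    rw [hK, Finset.mem_Icc] at hk
    obtain ⟨h1, h2⟩ := hk
    have hc1 : (L:ℝ) ≤ (k:ℝ) := by exact_mod_cast h1
    have hc2 : (k:ℝ) ≤ (U:ℝ) := by exact_mod_cast h2
    have hna : (n:ℝ)*a ≤ (L:ℝ) := by rw [hL]; exact Int.le_ceil _
    have hnb : (U:ℝ) ≤ (n:ℝ)*b := by rw [hU]; exact Int.floor_le _
    have hcomm1 : a*(n:ℝ) = (n:ℝ)*a := mul_comm _ _
    have hcomm2 : b*(n:ℝ) = (n:ℝ)*b := mul_comm _ _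
    constructor
    · rw [le_div_iff₀ hn0]; linarith
    · rw [div_le_iff₀ hn0]; linarith
  have hna' : (0:ℝ) < (n:ℝ)^α := Real.rpow_pos_of_pos hn0 _
  have hlamn : lam / n = dl := by
    rw [hlam, hdl, Real.rpow_sub hn0, Real.rpow_one]
    field_simp
  have hnear : ∀ k ∈ K, |y - (k:ℝ)| ≤ lam → ‖f ((k:ℝ)/n) - f x‖ ≤ om := by
    intro k hk habs
    apply homub _ _ (hknab k hk) hxmem
    have he : |(k:ℝ)/n - x| = |y - (k:ℝ)|/n := by
      rw [show (k:ℝ)/n - x = -((y - (k:ℝ))/n) by rw [hy]; field_simp; ring]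
      rw [abs_neg, abs_div, abs_of_pos hn0]
    rw [he, ← hlamn]
    gcongr
  have hfar : ∀ k ∈ K, ‖f ((k:ℝ)/n) - f x‖ ≤ 2*S := by
    intro k hk
    calc ‖f ((k:ℝ)/n) - f x‖ ≤ ‖f ((k:ℝ)/n)‖ + ‖f x‖ := norm_sub_le _ _
      _ ≤ 2*S := by linarith [hSub _ (hknab k hk), hSub x hxmem]
  -- the tail bound
  set R : ℝ := C/(2*(m:ℝ)*(lam-2)^(2*m)) with hR
  clear_value R
  have hR0 : 0 ≤ R := by
    rw [hR]
    exact le_of_lt (div_pos hCpos (mul_pos (mul_pos two_pos hm0) hX))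
  set beta : ℝ := 1/(4*(m:ℝ)*(lam - 2)^(2*m)) with hbeta
  clear_value beta
  have hRbeta : R = 2*C*beta := by
    rw [hR, hbeta]
    ring
  set Kfar := K.filter (fun k : ℤ => lam < |y - (k:ℝ)|) with hKfar
  have hT : ∑ k ∈ Kfar, Phi m (y - (k:ℝ)) ≤ R * V := by
    set K1 : ℤ := ⌈y - lam⌉ - 1 with hK1
    set K2 : ℤ := ⌊y + lam⌋ + 1 with hK2
    have hK1lt : (K1:ℝ) < y - lam := by
      have := Int.ceil_lt_add_one (y - lam)
      rw [hK1]; push_cast; linarith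
    have hK2gt : y + lam < (K2:ℝ) := by
      have := Int.lt_floor_add_one (y + lam)
      rw [hK2]; push_cast; linarith
    have hK1U : K1 ≤ U := by
      have h1 : (K1:ℝ) < (U:ℝ) := by linarith
      exact_mod_cast h1.le
    have hLK2 : L ≤ K2 := by
      have h1 : (L:ℝ) < (K2:ℝ) := by linarith
      exact_mod_cast h1.le
    have hKl : K.filter (fun k : ℤ => lam < y - (k:ℝ)) = Finset.Icc L K1 := by
      ext k
      simp only [hK, Finset.mem_filter, Finset.mem_Icc]
      constructor
      · rintro ⟨⟨h1, h2⟩, h3⟩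
        refine ⟨h1, ?_⟩
        have hlt : (k:ℝ) < y - lam := by linarith
        have := Int.lt_ceil.mpr hlt
        omega
      · rintro ⟨h1, h2⟩
        have hkc : k < ⌈y - lam⌉ := by omega
        have := Int.lt_ceil.mp hkc
        exact ⟨⟨h1, le_trans h2 hK1U⟩, by linarith⟩
    have hKr : K.filter (fun k : ℤ => lam < (k:ℝ) - y) = Finset.Icc K2 U := by
      ext k
      simp only [hK, Finset.mem_filter, Finset.mem_Icc]
      constructor
      · rintro ⟨⟨h1, h2⟩, h3⟩
        refine ⟨?_, h2⟩
        have hlt : y + lam < (k:ℝ) := by linarith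
        have := Int.floor_lt.mpr hlt
        omega
      · rintro ⟨h1, h2⟩
        have hkc : ⌊y + lam⌋ < k := by omega
        have := Int.floor_lt.mp hkc
        exact ⟨⟨le_trans hLK2 h1, h2⟩, by linarith⟩
    have hfilter_eq : Kfar = (K.filter (fun k : ℤ => lam < y - (k:ℝ)))
        ∪ (K.filter (fun k : ℤ => lam < (k:ℝ) - y)) := by
      rw [hKfar, ← Finset.filter_or]
      apply Finset.filter_congr
      intro k _
      simp only [lt_abs, neg_sub]
    have hdisj : Disjoint (K.filter fun k : ℤ => lam < y - (k:ℝ))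
        (K.filter fun k : ℤ => lam < (k:ℝ) - y) := by
      rw [Finset.disjoint_left]
      intro k h1 h2
      simp only [Finset.mem_filter] at h1 h2
      linarith [h1.2, h2.2]
    rw [hfilter_eq, Finset.sum_union hdisj, hKl, hKr]
    have hTl : ∀ _ : L ≤ K1, ∑ k ∈ Finset.Icc L K1, Phi m (y - (k:ℝ)) ≤ beta := by
      intro h
      rw [hbeta]
      exact side_bound hm y lam L K1 h hlam2 (by linarith)
    have hTr : ∀ _ : K2 ≤ U, ∑ k ∈ Finset.Icc K2 U, Phi m (y - (k:ℝ)) ≤ beta := by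
      intro h
      rw [sum_Icc_neg (fun k : ℤ => Phi m (y - (k:ℝ))) K2 U]
      have hcg : ∀ k ∈ Finset.Icc (-U) (-K2), Phi m (y - ((-k : ℤ):ℝ)) = Phi m (-y - (k:ℝ)) := by
        intro k _
        rw [show y - ((-k : ℤ):ℝ) = -(-y - (k:ℝ)) by push_cast; ring, Phi_even]
      rw [Finset.sum_congr rfl hcg, hbeta]
      apply side_bound hm (-y) lam (-U) (-K2) (by omega) hlam2
      push_cast
      linarith
    by_cases hl : L ≤ K1 <;> by_cases hr : K2 ≤ U
    · -- both sides nonempty : V ≥ 1/C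
      have hb1 := hTl hl
      have hb2 := hTr hr
      have hfy1 : (L:ℝ) < y - lam := by
        have h1 : (L:ℝ) ≤ (K1:ℝ) := by exact_mod_cast hl
        linarith
      have hfy2 : y + lam < (U:ℝ) := by
        have h1 : (K2:ℝ) ≤ (U:ℝ) := by exact_mod_cast hr
        linarith
      have hfl1 : L ≤ ⌊y⌋ := by
        have h1 : (L:ℝ) < (⌊y⌋:ℝ) := by linarith [Int.lt_floor_add_one y]
        exact_mod_cast h1.le
      have hfl2 : ⌊y⌋ + 1 ≤ U := by
        have h1 : ((⌊y⌋+1 : ℤ):ℝ) < (U:ℝ) := by push_cast; linarith [Int.floor_le y]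
        exact_mod_cast h1.le
      have hpairV : 1/C ≤ V := by
        have hsub : ({⌊y⌋, ⌊y⌋+1} : Finset ℤ) ⊆ K := by
          intro k hk
          rw [hK, Finset.mem_Icc]
          rcases Finset.mem_insert.mp hk with h | h
          · subst h; omega
          · rw [Finset.mem_singleton] at h; subst h; omega
        have hsum : ∑ k ∈ ({⌊y⌋, ⌊y⌋+1} : Finset ℤ), Phi m (y - (k:ℝ)) ≤ V := by
          rw [hV]
          exact Finset.sum_le_sum_of_subset_of_nonneg hsub (fun k _ _ => Phi_nonneg hm _)
        rw [Finset.sum_pair (by omega)] at hsum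
        have p1 : 1/(2*C) ≤ Phi m (y - (⌊y⌋:ℝ)) := by
          have := Phi_ge hm (t := y - (⌊y⌋:ℝ))
            (by rw [abs_le]; constructor <;> linarith [Int.lt_floor_add_one y, Int.floor_le y])
          rw [← hC] at this
          exact this
        have p2 : 1/(2*C) ≤ Phi m (y - ((⌊y⌋+1 : ℤ):ℝ)) := by
          have := Phi_ge hm (t := y - ((⌊y⌋+1 : ℤ):ℝ))
            (by push_cast; rw [abs_le]; constructor <;> linarith [Int.lt_floor_add_one y, Int.floor_le y])
          rw [← hC] at this
          exact this
        have hcc : 1/(2*C) + 1/(2*C) = 1/C := by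
          rw [← add_div, show (1:ℝ)+1 = 2 by norm_num]
          rw [show (2:ℝ)/(2*C) = (2*1)/(2*C) by norm_num, mul_div_mul_left _ _ (two_ne_zero)]
        linarith
      have hmul : R * (1/C) ≤ R * V := mul_le_mul_of_nonneg_left hpairV hR0
      have hRC : R * (1/C) = 2*beta := by
        rw [hRbeta]; first | (field_simp; ring) | field_simp
      linarith
    · have hempty : Finset.Icc K2 U = ∅ := Finset.Icc_eq_empty hr
      rw [hempty, Finset.sum_empty]
      have hb1 := hTl hl
      have hmul : R * (1/(2*C)) ≤ R * V := mul_le_mul_of_nonneg_left hVge1 hR0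
      have hRC : R * (1/(2*C)) = beta := by
        rw [hRbeta]; first | (field_simp; ring) | field_simp
      linarith
    · have hempty : Finset.Icc L K1 = ∅ := Finset.Icc_eq_empty hl
      rw [hempty, Finset.sum_empty]
      have hb2 := hTr hr
      have hmul : R * (1/(2*C)) ≤ R * V := mul_le_mul_of_nonneg_left hVge1 hR0
      have hRC : R * (1/(2*C)) = beta := by
        rw [hRbeta]; first | (field_simp; ring) | field_simp
      linarith
    · rw [Finset.Icc_eq_empty hl, Finset.Icc_eq_empty hr, Finset.sum_empty]
      have := mul_nonneg hR0 hV0.le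
      linarith
  -- putting it all together
  have hsplitsum : ∑ k ∈ K, Phi m (y - (k:ℝ)) * ‖f ((k:ℝ)/n) - f x‖
      = (∑ k ∈ Kfar, Phi m (y - (k:ℝ)) * ‖f ((k:ℝ)/n) - f x‖)
        + ∑ k ∈ K.filter (fun k : ℤ => ¬ lam < |y - (k:ℝ)|), Phi m (y - (k:ℝ)) * ‖f ((k:ℝ)/n) - f x‖ := by
    rw [hKfar]
    exact (Finset.sum_filter_add_sum_filter_not K _ _).symm
  have hnear_sum : ∑ k ∈ K.filter (fun k : ℤ => ¬ lam < |y - (k:ℝ)|),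
      Phi m (y - (k:ℝ)) * ‖f ((k:ℝ)/n) - f x‖ ≤ om * V := by
    calc ∑ k ∈ K.filter (fun k : ℤ => ¬ lam < |y - (k:ℝ)|), Phi m (y - (k:ℝ)) * ‖f ((k:ℝ)/n) - f x‖
        ≤ ∑ k ∈ K.filter (fun k : ℤ => ¬ lam < |y - (k:ℝ)|), Phi m (y - (k:ℝ)) * om := by
          apply Finset.sum_le_sum
          intro k hk
          rw [Finset.mem_filter] at hk
          exact mul_le_mul_of_nonneg_left (hnear k hk.1 (not_lt.mp hk.2)) (Phi_nonneg hm _)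
      _ = om * ∑ k ∈ K.filter (fun k : ℤ => ¬ lam < |y - (k:ℝ)|), Phi m (y - (k:ℝ)) := by
          rw [← Finset.sum_mul, mul_comm]
      _ ≤ om * V := by
          apply mul_le_mul_of_nonneg_left _ hom0
          rw [hV]
          exact Finset.sum_le_sum_of_subset_of_nonneg (Finset.filter_subset _ _)
            (fun k _ _ => Phi_nonneg hm _)
  have hfar_sum : ∑ k ∈ Kfar, Phi m (y - (k:ℝ)) * ‖f ((k:ℝ)/n) - f x‖ ≤ 2*S*(R*V) := by
    calc ∑ k ∈ Kfar, Phi m (y - (k:ℝ)) * ‖f ((k:ℝ)/n) - f x‖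
        ≤ ∑ k ∈ Kfar, Phi m (y - (k:ℝ)) * (2*S) := by
          apply Finset.sum_le_sum
          intro k hk
          rw [hKfar, Finset.mem_filter] at hk
          exact mul_le_mul_of_nonneg_left (hfar k hk.1) (Phi_nonneg hm _)
      _ = 2*S * ∑ k ∈ Kfar, Phi m (y - (k:ℝ)) := by rw [← Finset.sum_mul, mul_comm]
      _ ≤ 2*S*(R*V) := mul_le_mul_of_nonneg_left hT (by linarith)
  have hmain : ‖(V⁻¹ • ∑ k ∈ K, Phi m (y - (k:ℝ)) • f ((k:ℝ)/n)) - f x‖ ≤ om + 2*S*R := by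
    refine le_trans hnorm ?_
    rw [hsplitsum]
    have hstep : V⁻¹ * ((2*S*(R*V)) + om * V) = om + 2*S*R := by
      field_simp
      ring
    calc V⁻¹ * ((∑ k ∈ Kfar, Phi m (y - (k:ℝ)) * ‖f ((k:ℝ)/n) - f x‖)
          + ∑ k ∈ K.filter (fun k : ℤ => ¬ lam < |y - (k:ℝ)|), Phi m (y - (k:ℝ)) * ‖f ((k:ℝ)/n) - f x‖)
        ≤ V⁻¹ * ((2*S*(R*V)) + om * V) := by
          apply mul_le_mul_of_nonneg_left _ (inv_pos.mpr hV0).le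
          exact add_le_add hfar_sum hnear_sum
      _ = om + 2*S*R := hstep
  refine le_trans hmain ?_
  have hexp : 2*S*R = C * (S/((m:ℝ)*(lam-2)^(2*m))) := by
    rw [hR]; ring
  have homC : om ≤ 2*C*om := by
    calc om = om*1 := (mul_one om).symm
      _ ≤ om*(2*C) := mul_le_mul_of_nonneg_left (by linarith) hom0
      _ = 2*C*om := by ring
  rw [mul_add]
  have hCom : C*(2*om) = 2*C*om := by ring
  calc om + 2*S*R ≤ C*(2*om) + C * (S/((m:ℝ)*(lam-2)^(2*m))) := by
        rw [← hexp]
        linarith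
    _ = C * (2*om) + C * (S / ((m:ℝ) * ((lam) - 2) ^ (2*m))) := by ring
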